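/- Fix a real δ > 0 and let P_δ be the (finite) set of primes p > 3 with p·(2/(p−1))^{1+δ} > 1, and set C_δ = 24·∏_{p ∈ P_δ} p·(2/(p−1))^{1+δ}. Then for every positive integer N, N ≤ C_δ · k(N)^{1+δ}. -/

import Mathlib

/-- `k(N)`: the cardinality of the image of the squaring map `x ↦ x²`
on the unit group `(ℤ/Nℤ)ˣ`. -/
noncomputable def sqImageCard (N : ℕ) : ℕ :=
  Nat.card (Set.range fun x : (ZMod N)ˣ => x ^ 2)

section Aux

lemma card_range_sq_mul_card_ker (G : Type*) [CommGroup G] [Finite G] :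
    Nat.card (Set.range fun x : G => x ^ 2) *
      Nat.card (powMonoidHom 2 : G →* G).ker = Nat.card G := by
  have h : (Set.range fun x : G => x ^ 2) = ((powMonoidHom 2 : G →* G).range : Set G) := by
    ext y; simp [powMonoidHom_apply, eq_comm]
  rw [h]
  have h2 := Subgroup.card_eq_card_quotient_mul_card_subgroup (powMonoidHom 2 : G →* G).ker
  rw [h2]
  congr 1
  exact (Nat.card_congr (QuotientGroup.quotientKerEquivRange (powMonoidHom 2 : G →* G)).toEquiv).symm

lemma one_le_card_range_sq (G : Type*) [CommGroup G] [Finite G] :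
    1 ≤ Nat.card (Set.range fun x : G => x ^ 2) :=
  Nat.one_le_iff_ne_zero.mpr (Nat.card_ne_zero.mpr
    ⟨⟨1, ⟨1, one_pow 2⟩⟩, Set.finite_range _ |>.to_subtype⟩)

lemma card_range_sq_congr {G H : Type*} [CommGroup G] [CommGroup H] (e : G ≃* H) :
    Nat.card (Set.range fun x : G => x ^ 2) = Nat.card (Set.range fun x : H => x ^ 2) := by
  have h : (Set.range fun x : H => x ^ 2) = (⇑e) '' (Set.range fun x : G => x ^ 2) := by
    ext y
    constructor
    · rintro ⟨x, rfl⟩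
      exact ⟨(e.symm x) ^ 2, ⟨e.symm x, rfl⟩, by rw [map_pow, e.apply_symm_apply]⟩
    · rintro ⟨_, ⟨x, rfl⟩, rfl⟩
      exact ⟨e x, (map_pow e x 2).symm⟩
  rw [h, Nat.card_image_of_injective e.injective]

lemma card_range_sq_prod (G H : Type*) [CommGroup G] [CommGroup H] :
    Nat.card (Set.range fun x : G × H => x ^ 2) =
      Nat.card (Set.range fun x : G => x ^ 2) * Nat.card (Set.range fun x : H => x ^ 2) := by
  have h : (Set.range fun x : G × H => x ^ 2) =
      (Set.range fun x : G => x ^ 2) ×ˢ (Set.range fun x : H => x ^ 2) := by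
    ext ⟨a, b⟩
    simp [Prod.ext_iff, Set.mem_prod]
  rw [h, ← Nat.card_prod]
  exact Nat.card_congr (Equiv.Set.prod _ _)

lemma sqImageCard_mul {m n : ℕ} (h : Nat.Coprime m n) :
    sqImageCard (m * n) = sqImageCard m * sqImageCard n := by
  unfold sqImageCard
  have e : (ZMod (m * n))ˣ ≃* (ZMod m)ˣ × (ZMod n)ˣ :=
    (Units.mapEquiv (ZMod.chineseRemainder h).toMulEquiv).trans MulEquiv.prodUnits
  rw [card_range_sq_congr e, card_range_sq_prod]

lemma sq_eq_one_odd {p : ℕ} (hp : p.Prime) (hodd : p ≠ 2) {e : ℕ}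
    (u : (ZMod (p ^ e))ˣ) (hu : u ^ 2 = 1) :
    (u : ZMod (p ^ e)) = 1 ∨ (u : ZMod (p ^ e)) = -1 := by
  haveI : NeZero (p ^ e) := ⟨pow_ne_zero e hp.pos.ne'⟩
  set a : ZMod (p ^ e) := (u : ZMod (p ^ e)) with ha
  set z : ℤ := (a.val : ℤ) with hz
  have hcast : ((z : ℤ) : ZMod (p ^ e)) = a := by
    rw [hz]; push_cast; rw [ZMod.natCast_val, ZMod.cast_id]
  have hsq : a ^ 2 = 1 := by
    have := congrArg (Units.val) hu
    push_cast at this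
    exact this
  have hdvd : ((p : ℤ) ^ e) ∣ (z - 1) * (z + 1) := by
    have h0 : (((z - 1) * (z + 1) : ℤ) : ZMod (p ^ e)) = 0 := by
      push_cast
      rw [hcast]
      rw [← sub_eq_zero] at hsq
      linear_combination hsq
    have := (ZMod.intCast_zmod_eq_zero_iff_dvd _ _).mp h0
    rwa [Nat.cast_pow] at this
  have hprime : Prime (p : ℤ) := Nat.prime_iff_prime_int.mp hp
  have hnot2 : ¬ ((p : ℤ) ∣ 2) := by
    intro hd
    have h2 : p ∣ 2 := by exact_mod_cast hd
    exact hodd ((Nat.prime_dvd_prime_iff_eq hp Nat.prime_two).mp h2)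
  by_cases hc : (p : ℤ) ∣ (z + 1)
  · have hc2 : ¬ (p : ℤ) ∣ (z - 1) := by
      intro hd
      exact hnot2 (by have := dvd_sub hc hd; simpa using this)
    have hdd : ((p : ℤ) ^ e) ∣ (z + 1) := hprime.pow_dvd_of_dvd_mul_left e hc2 hdvd
    right
    have h0 : (((z + 1 : ℤ)) : ZMod (p ^ e)) = 0 := by
      rw [ZMod.intCast_zmod_eq_zero_iff_dvd]; exact_mod_cast hdd
    push_cast at h0
    rw [hcast] at h0
    linear_combination h0
  · have hdd : ((p : ℤ) ^ e) ∣ (z - 1) := hprime.pow_dvd_of_dvd_mul_right e hc hdvd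
    left
    have h0 : (((z - 1 : ℤ)) : ZMod (p ^ e)) = 0 := by
      rw [ZMod.intCast_zmod_eq_zero_iff_dvd]; exact_mod_cast hdd
    push_cast at h0
    rw [hcast] at h0
    linear_combination h0

lemma sq_eq_one_two {f : ℕ} (a : ZMod (2 ^ (f + 1))) (hun : IsUnit a) (hsq : a ^ 2 = 1) :
    a = 1 ∨ a = -1 ∨ a = 1 + 2 ^ f ∨ a = -1 + 2 ^ f := by
  haveI : NeZero (2 ^ (f + 1)) := ⟨pow_ne_zero _ two_ne_zero⟩
  set z : ℤ := (a.val : ℤ) with hz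
  have hcast : ((z : ℤ) : ZMod (2 ^ (f + 1))) = a := by
    rw [hz]; push_cast; rw [ZMod.natCast_val, ZMod.cast_id]
  have h2e : (2 : ZMod (2 ^ (f + 1))) ^ (f + 1) = 0 := by
    have := ZMod.natCast_self (2 ^ (f + 1))
    exact_mod_cast this
  have hodd : Odd z := by
    have hcop : Nat.Coprime (hun.unit : ZMod (2 ^ (f + 1))).val (2 ^ (f + 1)) :=
      ZMod.val_coe_unit_coprime hun.unit
    rw [hun.unit_spec] at hcop
    have hcop2 : Nat.Coprime 2 a.val :=
      ((Nat.Coprime.coprime_dvd_right (dvd_pow_self 2 (Nat.succ_ne_zero f)) hcop)).symm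
    have hnd : ¬ (2 ∣ a.val) := fun hd => by simpa using hcop2.eq_one_of_dvd hd
    rw [hz, Int.odd_coe_nat]
    exact Nat.odd_iff.mpr (Nat.two_dvd_ne_zero.mp hnd)
  obtain ⟨s, hs⟩ := hodd
  have hdvd : ((2 : ℤ) ^ (f + 1)) ∣ (z - 1) * (z + 1) := by
    have h0 : (((z - 1) * (z + 1) : ℤ) : ZMod (2 ^ (f + 1))) = 0 := by
      push_cast
      rw [hcast]
      rw [← sub_eq_zero] at hsq
      linear_combination hsq
    have := (ZMod.intCast_zmod_eq_zero_iff_dvd _ (2 ^ (f + 1))).mp h0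
    exact_mod_cast this
  have key : ((2 : ℤ) ^ f) ∣ (z - 1) ∨ ((2 : ℤ) ^ f) ∣ (z + 1) := by
    rcases Nat.eq_zero_or_pos f with hf | hf
    · left; simp [hf]
    · obtain ⟨g, hg⟩ : ∃ g, f = g + 1 := ⟨f - 1, (Nat.succ_pred_eq_of_pos hf).symm⟩
      subst hg
      have h4 : (2:ℤ) ^ (g + 1 + 1) = 4 * 2 ^ g := by ring
      have hzz : (z - 1) * (z + 1) = 4 * (s * (s + 1)) := by rw [hs]; ring
      have hdvd' : ((2:ℤ) ^ g) ∣ s * (s + 1) := by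
        have : (4 : ℤ) * 2 ^ g ∣ 4 * (s * (s + 1)) := by rw [← h4, ← hzz]; exact hdvd
        exact (mul_dvd_mul_iff_left (by norm_num : (4:ℤ) ≠ 0)).mp this
      rcases Int.even_or_odd s with hse | hso
      · left
        obtain ⟨m, hm⟩ := hse
        have hnd : ¬ (2:ℤ) ∣ (s + 1) := by
          rw [hm]; intro ⟨q, hq⟩; omega
        have := Int.prime_two.pow_dvd_of_dvd_mul_right g hnd hdvd'
        calc ((2:ℤ)^(g+1)) = 2 ^ g * 2 := by ring
        _ ∣ s * 2 := mul_dvd_mul_right this 2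
        _ = z - 1 := by rw [hs]; ring
      · right
        obtain ⟨m, hm⟩ := hso
        have hnd : ¬ (2:ℤ) ∣ s := by
          rw [hm]; intro ⟨q, hq⟩; omega
        have := Int.prime_two.pow_dvd_of_dvd_mul_left g hnd hdvd'
        calc ((2:ℤ)^(g+1)) = 2 ^ g * 2 := by ring
        _ ∣ (s+1) * 2 := mul_dvd_mul_right this 2
        _ = z + 1 := by rw [hs]; ring
  have main : ∀ w : ℤ, ((2:ℤ) ^ f) ∣ (z - w) →
      a = (w : ZMod (2 ^ (f + 1))) ∨ a = (w : ZMod (2 ^ (f + 1))) + 2 ^ f := by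
    intro w ⟨t, ht⟩
    have hzw : z = w + 2 ^ f * t := by linarith
    have hcast2 : a = (w : ZMod (2 ^ (f+1))) + 2 ^ f * (t : ZMod (2 ^ (f+1))) := by
      rw [← hcast, hzw]; push_cast; ring
    rcases Int.even_or_odd t with ⟨m, hm⟩ | ⟨m, hm⟩
    · left
      rw [hcast2, hm]
      push_cast
      linear_combination (m : ZMod (2 ^ (f+1))) * h2e
    · right
      rw [hcast2, hm]
      push_cast
      linear_combination (m : ZMod (2 ^ (f+1))) * h2e
  rcases key with h | h
  · rcases main 1 h with h1 | h1
    · left; rw [h1]; norm_num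
    · right; right; left; rw [h1]; norm_num
  · rcases main (-1) (by simpa using h) with h1 | h1
    · right; left; rw [h1]; norm_num
    · right; right; right; rw [h1]; norm_num

lemma card_ker_sq_odd {p : ℕ} (hp : p.Prime) (hodd : p ≠ 2) (e : ℕ) :
    Nat.card ((powMonoidHom 2 : (ZMod (p ^ e))ˣ →* (ZMod (p ^ e))ˣ).ker) ≤ 2 := by
  classical
  set S : Finset (ZMod (p ^ e)) := {1, -1} with hS
  have hmem : ∀ x : ((powMonoidHom 2 : (ZMod (p ^ e))ˣ →* (ZMod (p ^ e))ˣ).ker),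
      ((x : (ZMod (p ^ e))ˣ) : ZMod (p ^ e)) ∈ S := by
    rintro ⟨x, hx⟩
    rw [MonoidHom.mem_ker, powMonoidHom_apply] at hx
    rcases sq_eq_one_odd hp hodd x hx with h | h <;> simp [hS, h]
  have hinj : Function.Injective
      (fun x : ((powMonoidHom 2 : (ZMod (p ^ e))ˣ →* (ZMod (p ^ e))ˣ).ker) =>
        (⟨((x : (ZMod (p ^ e))ˣ) : ZMod (p ^ e)), hmem x⟩ : {y // y ∈ S})) :=
    fun x y h => Subtype.ext (Units.ext (congrArg Subtype.val h))
  calc Nat.card ((powMonoidHom 2 : (ZMod (p ^ e))ˣ →* (ZMod (p ^ e))ˣ).ker)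
      ≤ Nat.card {y // y ∈ S} := Nat.card_le_card_of_injective _ hinj
    _ = S.card := Nat.card_eq_finsetCard S
    _ ≤ 2 := (Finset.card_insert_le _ _).trans (by simp)

lemma card_ker_sq_two (f : ℕ) :
    Nat.card ((powMonoidHom 2 : (ZMod (2 ^ (f + 1)))ˣ →* (ZMod (2 ^ (f + 1)))ˣ).ker) ≤ 4 := by
  classical
  set S : Finset (ZMod (2 ^ (f + 1))) := {1, -1, 1 + 2 ^ f, -1 + 2 ^ f} with hS
  have hmem : ∀ x : ((powMonoidHom 2 : (ZMod (2 ^ (f + 1)))ˣ →* (ZMod (2 ^ (f + 1)))ˣ).ker),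
      ((x : (ZMod (2 ^ (f + 1)))ˣ) : ZMod (2 ^ (f + 1))) ∈ S := by
    rintro ⟨x, hx⟩
    rw [MonoidHom.mem_ker, powMonoidHom_apply] at hx
    have hx2 : (x : ZMod (2 ^ (f + 1))) ^ 2 = 1 := by
      have := congrArg (Units.val) hx
      push_cast at this
      exact this
    rcases sq_eq_one_two (x : ZMod (2 ^ (f + 1))) x.isUnit hx2 with h | h | h | h <;>
      simp [hS, h]
  have hinj : Function.Injective
      (fun x : ((powMonoidHom 2 : (ZMod (2 ^ (f + 1)))ˣ →* (ZMod (2 ^ (f + 1)))ˣ).ker) =>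
        (⟨((x : (ZMod (2 ^ (f + 1)))ˣ) : ZMod (2 ^ (f + 1))), hmem x⟩ : {y // y ∈ S})) :=
    fun x y h => Subtype.ext (Units.ext (congrArg Subtype.val h))
  calc Nat.card ((powMonoidHom 2 : (ZMod (2 ^ (f + 1)))ˣ →* (ZMod (2 ^ (f + 1)))ˣ).ker)
      ≤ Nat.card {y // y ∈ S} := Nat.card_le_card_of_injective _ hinj
    _ = S.card := Nat.card_eq_finsetCard S
    _ ≤ 4 := by
        refine (Finset.card_insert_le _ _).trans (Nat.succ_le_succ ?_)
        refine (Finset.card_insert_le _ _).trans (Nat.succ_le_succ ?_)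
        exact (Finset.card_insert_le _ _).trans (by simp)

lemma le_rpow_self {k : ℝ} (hk : 1 ≤ k) {δ : ℝ} (hδ : 0 < δ) : k ≤ k ^ (1 + δ) := by
  nth_rewrite 1 [← Real.rpow_one k]
  exact Real.rpow_le_rpow_of_exponent_le hk (by linarith)

lemma real_two {f k : ℕ} {δ : ℝ} (hδ : 0 < δ)
    (hk : Nat.totient (2 ^ (f + 1)) ≤ 4 * k) (hk1 : 1 ≤ k) :
    ((2 ^ (f + 1) : ℕ) : ℝ) ≤ 8 * (k : ℝ) ^ (1 + δ) := by
  have ht : Nat.totient (2 ^ (f + 1)) = 2 ^ f := by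
    rw [Nat.totient_prime_pow Nat.prime_two (Nat.succ_pos f)]
    simp
  rw [ht] at hk
  push_cast
  have hh : ((2 : ℝ) ^ f) ≤ 4 * k := by exact_mod_cast hk
  have hpow : (2:ℝ) ^ (f+1) = 2 ^ f * 2 := pow_succ 2 f
  have hle := le_rpow_self (by exact_mod_cast hk1 : (1:ℝ) ≤ (k:ℝ)) hδ
  nlinarith

lemma real_odd {p e k : ℕ} {δ : ℝ} (hδ : 0 < δ) (hp : p.Prime) (he : 0 < e)
    (hk : Nat.totient (p ^ e) ≤ 2 * k) (hk1 : 1 ≤ k) :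
    ((p ^ e : ℕ) : ℝ) ≤
      max 1 ((p : ℝ) * (2 / ((p : ℝ) - 1)) ^ (1 + δ)) * (k : ℝ) ^ (1 + δ) := by
  have hp1 : (1 : ℝ) < (p : ℝ) := by exact_mod_cast hp.one_lt
  have hp1' : (0 : ℝ) < (p : ℝ) - 1 := by linarith
  have ht : Nat.totient (p ^ e) = p ^ (e - 1) * (p - 1) := Nat.totient_prime_pow hp he
  rw [ht] at hk
  have hKnat : ((p : ℝ) - 1) * (p : ℝ) ^ (e - 1) ≤ 2 * (k : ℝ) := by
    have := hk
    have hcast : ((p ^ (e - 1) * (p - 1) : ℕ) : ℝ) = (p : ℝ) ^ (e - 1) * ((p : ℝ) - 1) := by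
      push_cast [Nat.cast_sub hp.one_lt.le]
      ring
    calc ((p : ℝ) - 1) * (p : ℝ) ^ (e - 1) = ((p ^ (e - 1) * (p - 1) : ℕ) : ℝ) := by
          rw [hcast]; ring
      _ ≤ ((2 * k : ℕ) : ℝ) := by exact_mod_cast hk
      _ = 2 * (k : ℝ) := by push_cast; ring
  set K : ℝ := (k : ℝ) with hKdef
  have hK1 : (1:ℝ) ≤ K := by rw [hKdef]; exact_mod_cast hk1
  have hK0 : (0 : ℝ) < K := by linarith
  have hb : (0:ℝ) ≤ ((p : ℝ) - 1) / 2 * (p : ℝ) ^ (e - 1) := by positivity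
  have hKb : ((p : ℝ) - 1) / 2 * (p : ℝ) ^ (e - 1) ≤ K := by linarith
  have h1 : (((p : ℝ) - 1) / 2 * (p : ℝ) ^ (e - 1)) ^ (1 + δ) ≤ K ^ (1 + δ) :=
    Real.rpow_le_rpow hb hKb (by linarith)
  have h2 : (((p : ℝ) - 1) / 2 * (p : ℝ) ^ (e - 1)) ^ (1 + δ) =
      (((p : ℝ) - 1) / 2) ^ (1 + δ) * ((p : ℝ) ^ (e - 1)) ^ (1 + δ) :=
    Real.mul_rpow (by positivity) (by positivity)
  have h3 : ((p : ℝ) ^ (e - 1) : ℝ) ≤ ((p : ℝ) ^ (e - 1)) ^ (1 + δ) :=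
    le_rpow_self (one_le_pow₀ hp1.le) hδ
  have hF0 : (0 : ℝ) < (2 / ((p : ℝ) - 1)) ^ (1 + δ) := Real.rpow_pos_of_pos (by positivity) _
  have hcancel : (2 / ((p : ℝ) - 1)) ^ (1 + δ) * (((p : ℝ) - 1) / 2) ^ (1 + δ) = 1 := by
    rw [← Real.mul_rpow (by positivity) (by positivity)]
    rw [show (2 / ((p : ℝ) - 1)) * (((p : ℝ) - 1) / 2) = 1 by field_simp]
    exact Real.one_rpow _
  have key : ((p : ℝ)) * (2 / ((p : ℝ) - 1)) ^ (1 + δ) * K ^ (1 + δ) ≥ (p : ℝ) ^ e := by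
    have c1 : K ^ (1 + δ) ≥ (((p : ℝ) - 1) / 2) ^ (1 + δ) * ((p : ℝ) ^ (e - 1)) := by
      calc (((p : ℝ) - 1) / 2) ^ (1 + δ) * ((p : ℝ) ^ (e - 1))
          ≤ (((p : ℝ) - 1) / 2) ^ (1 + δ) * ((p : ℝ) ^ (e - 1)) ^ (1 + δ) := by
            apply mul_le_mul_of_nonneg_left h3 (Real.rpow_nonneg (by positivity) _)
        _ = (((p : ℝ) - 1) / 2 * (p : ℝ) ^ (e - 1)) ^ (1 + δ) := h2.symm
        _ ≤ K ^ (1 + δ) := h1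
    calc ((p : ℝ)) * (2 / ((p : ℝ) - 1)) ^ (1 + δ) * K ^ (1 + δ)
        ≥ ((p : ℝ)) * (2 / ((p : ℝ) - 1)) ^ (1 + δ) *
            ((((p : ℝ) - 1) / 2) ^ (1 + δ) * ((p : ℝ) ^ (e - 1))) := by
          apply mul_le_mul_of_nonneg_left c1 (by positivity)
      _ = (p : ℝ) * ((2 / ((p : ℝ) - 1)) ^ (1 + δ) * (((p : ℝ) - 1) / 2) ^ (1 + δ)) *
            (p : ℝ) ^ (e - 1) := by ring
      _ = (p : ℝ) * (p : ℝ) ^ (e - 1) := by rw [hcancel]; ring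
      _ = (p : ℝ) ^ e := by
          rw [← pow_succ']
          congr 1
          omega
  calc ((p ^ e : ℕ) : ℝ) = (p : ℝ) ^ e := by push_cast; ring
    _ ≤ ((p : ℝ)) * (2 / ((p : ℝ) - 1)) ^ (1 + δ) * K ^ (1 + δ) := key
    _ ≤ max 1 ((p : ℝ) * (2 / ((p : ℝ) - 1)) ^ (1 + δ)) * K ^ (1 + δ) := by
        apply mul_le_mul_of_nonneg_right (le_max_right _ _) (Real.rpow_nonneg hK0.le _)

/-- the per-prime constant -/
noncomputable def cpFactor (δ : ℝ) (p : ℕ) : ℝ :=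
  if p = 2 then 8 else max 1 ((p : ℝ) * (2 / ((p : ℝ) - 1)) ^ (1 + δ))

lemma one_le_cpFactor (δ : ℝ) (p : ℕ) : 1 ≤ cpFactor δ p := by
  unfold cpFactor
  split
  · norm_num
  · exact le_max_left _ _

lemma main_aux (δ : ℝ) (hδ : 0 < δ) :
    ∀ N : ℕ, 0 < N →
      (N : ℝ) ≤ (∏ p ∈ N.primeFactors, cpFactor δ p) * ((sqImageCard N : ℝ)) ^ (1 + δ) := by
  intro N
  induction N using Nat.recOnPosPrimePosCoprime with
  | zero => intro h; exact absurd h (lt_irrefl 0)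
  | one =>
      intro _
      haveI : NeZero (1 : ℕ) := ⟨one_ne_zero⟩
      have hk1 : 1 ≤ sqImageCard 1 := one_le_card_range_sq (ZMod 1)ˣ
      have : (1:ℝ) ≤ ((sqImageCard 1 : ℝ)) ^ (1 + δ) := by
        refine le_trans ?_ (le_rpow_self (by exact_mod_cast hk1) hδ)
        exact_mod_cast hk1
      simpa using this
  | prime_pow p n hpp hn =>
      intro _
      have hp' : p.Prime := hpp
      haveI : NeZero (p ^ n) := ⟨pow_ne_zero _ hp'.pos.ne'⟩
      have hk1 : 1 ≤ sqImageCard (p ^ n) := one_le_card_range_sq (ZMod (p ^ n))ˣ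
      have lag : sqImageCard (p ^ n) *
          Nat.card ((powMonoidHom 2 : (ZMod (p ^ n))ˣ →* (ZMod (p ^ n))ˣ).ker)
          = Nat.totient (p ^ n) := by
        rw [sqImageCard, card_range_sq_mul_card_ker]
        rw [Nat.card_eq_fintype_card, ZMod.card_units_eq_totient]
      rw [Nat.primeFactors_prime_pow hn.ne' hpp, Finset.prod_singleton]
      by_cases h2 : p = 2
      · subst h2
        obtain ⟨f, rfl⟩ : ∃ f, n = f + 1 := ⟨n - 1, (Nat.succ_pred_eq_of_pos hn).symm⟩
        have htot : Nat.totient (2 ^ (f + 1)) ≤ 4 * sqImageCard (2 ^ (f + 1)) := by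
          rw [← lag]
          calc sqImageCard (2 ^ (f + 1)) *
              Nat.card ((powMonoidHom 2 : (ZMod (2 ^ (f+1)))ˣ →* (ZMod (2 ^ (f+1)))ˣ).ker)
              ≤ sqImageCard (2 ^ (f + 1)) * 4 :=
                Nat.mul_le_mul_left _ (card_ker_sq_two f)
            _ = 4 * sqImageCard (2 ^ (f + 1)) := Nat.mul_comm _ _
        have := real_two hδ htot hk1
        rw [cpFactor, if_pos rfl]
        exact this
      · have htot : Nat.totient (p ^ n) ≤ 2 * sqImageCard (p ^ n) := by
          rw [← lag]
          calc sqImageCard (p ^ n) *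
              Nat.card ((powMonoidHom 2 : (ZMod (p ^ n))ˣ →* (ZMod (p ^ n))ˣ).ker)
              ≤ sqImageCard (p ^ n) * 2 :=
                Nat.mul_le_mul_left _ (card_ker_sq_odd hp' h2 n)
            _ = 2 * sqImageCard (p ^ n) := Nat.mul_comm _ _
        have := real_odd hδ hp' hn htot hk1
        rw [cpFactor, if_neg h2]
        exact this
  | coprime a b ha hb hab iha ihb =>
      intro _
      have ha0 : 0 < a := by omega
      have hb0 : 0 < b := by omega
      haveI : NeZero a := ⟨ha0.ne'⟩
      haveI : NeZero b := ⟨hb0.ne'⟩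
      have Ia := iha ha0
      have Ib := ihb hb0
      have hka : 1 ≤ sqImageCard a := one_le_card_range_sq (ZMod a)ˣ
      have hkb : 1 ≤ sqImageCard b := one_le_card_range_sq (ZMod b)ˣ
      rw [hab.primeFactors_mul, Finset.prod_union hab.disjoint_primeFactors,
        sqImageCard_mul hab]
      have hsplit : ((sqImageCard a * sqImageCard b : ℕ) : ℝ) ^ (1 + δ) =
          ((sqImageCard a : ℝ)) ^ (1 + δ) * ((sqImageCard b : ℝ)) ^ (1 + δ) := by
        push_cast
        exact Real.mul_rpow (by positivity) (by positivity)
      rw [hsplit]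
      have hRb : (0:ℝ) ≤ (∏ p ∈ b.primeFactors, cpFactor δ p) *
          ((sqImageCard b : ℝ)) ^ (1 + δ) := le_trans (by positivity) Ib
      calc ((a * b : ℕ) : ℝ) = (a : ℝ) * (b : ℝ) := by push_cast; ring
        _ ≤ ((∏ p ∈ a.primeFactors, cpFactor δ p) * ((sqImageCard a : ℝ)) ^ (1 + δ)) *
            ((∏ p ∈ b.primeFactors, cpFactor δ p) * ((sqImageCard b : ℝ)) ^ (1 + δ)) := by
            apply mul_le_mul Ia Ib (by positivity) (le_trans (by positivity) Ia)
        _ = (∏ p ∈ a.primeFactors, cpFactor δ p) * (∏ p ∈ b.primeFactors, cpFactor δ p) *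
            (((sqImageCard a : ℝ)) ^ (1 + δ) * ((sqImageCard b : ℝ)) ^ (1 + δ)) := by ring

end Aux

theorem stmt_4 (δ : ℝ) (hδ : 0 < δ) (P : Finset ℕ)
    (hP : ∀ p : ℕ, p ∈ P ↔
      p.Prime ∧ 3 < p ∧ 1 < (p : ℝ) * (2 / ((p : ℝ) - 1)) ^ (1 + δ))
    (N : ℕ) (hN : 0 < N) :
    (N : ℝ) ≤ (24 * ∏ p ∈ P, (p : ℝ) * (2 / ((p : ℝ) - 1)) ^ (1 + δ)) *
        (sqImageCard N : ℝ) ^ (1 + δ) := by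
  classical
  have hmain := main_aux δ hδ N hN
  set F : ℕ → ℝ := fun p => (p : ℝ) * (2 / ((p : ℝ) - 1)) ^ (1 + δ) with hF
  -- it suffices to bound the product of constants
  have hprod : (∏ p ∈ N.primeFactors, cpFactor δ p) ≤ 24 * ∏ p ∈ P, F p := by
    set S := N.primeFactors with hSdef
    set U : Finset ℕ := S ∪ insert 2 (insert 3 P) with hU
    have hSU : S ⊆ U := Finset.subset_union_left
    have h2U : (2 : ℕ) ∈ U := Finset.mem_union_right _ (Finset.mem_insert_self _ _)
    have h3U : (3 : ℕ) ∈ U :=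
      Finset.mem_union_right _ (Finset.mem_insert_of_mem (Finset.mem_insert_self _ _))
    have hPgt : ∀ p ∈ P, 3 < p := fun p hp => ((hP p).mp hp).2.1
    have hPF : ∀ p ∈ P, 1 < F p := fun p hp => ((hP p).mp hp).2.2
    set H : ℕ → ℝ := fun p => if p = 2 then 8 else if p = 3 then 3 else
        if p ∈ P then F p else 1 with hH
    have oneH : ∀ p, 1 ≤ H p := by
      intro p
      rw [hH]
      dsimp only
      split
      · norm_num
      · split
        · norm_num
        · split
          · exact le_of_lt (hPF _ (by assumption))
          · exact le_refl 1
    -- step 1 : extend the product over S to U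
    have step1 : (∏ p ∈ S, cpFactor δ p) =
        ∏ p ∈ U, (if p ∈ S then cpFactor δ p else 1) := by
      rw [← Finset.prod_subset hSU (fun x _ hx => if_neg hx)]
      exact Finset.prod_congr rfl fun p hp => (if_pos hp).symm
    -- step 2 : pointwise comparison
    have step2 : (∏ p ∈ U, (if p ∈ S then cpFactor δ p else 1)) ≤ ∏ p ∈ U, H p := by
      apply Finset.prod_le_prod
      · intro p _
        split
        · exact le_trans zero_le_one (one_le_cpFactor δ p)
        · norm_num
      · intro p _
        by_cases hpS : p ∈ S
        · rw [if_pos hpS]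
          have hpprime : p.Prime := Nat.prime_of_mem_primeFactors (hSdef ▸ hpS)
          rw [hH]; dsimp only
          by_cases hp2 : p = 2
          · rw [cpFactor, if_pos hp2, if_pos hp2]
          · rw [cpFactor, if_neg hp2, if_neg hp2]
            by_cases hp3 : p = 3
            · subst hp3
              rw [if_pos rfl]
              refine max_le (by norm_num) (le_of_eq ?_)
              norm_num [Real.one_rpow]
            · rw [if_neg hp3]
              by_cases hpP : p ∈ P
              · rw [if_pos hpP]
                exact max_le (le_of_lt (hPF p hpP)) (le_refl _)
              · rw [if_neg hpP]
                have hgt3 : 3 < p := by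
                  have := hpprime.two_le
                  omega
                have : ¬ (1 < F p) := fun hcon => hpP ((hP p).mpr ⟨hpprime, hgt3, hcon⟩)
                exact max_le (le_refl 1) (not_lt.mp this)
        · rw [if_neg hpS]
          exact oneH p
    -- step 3 : compute the product of H over U
    have step3 : (∏ p ∈ U, H p) = 24 * ∏ p ∈ P, F p := by
      rw [← Finset.prod_erase_mul U H h2U]
      have h3' : (3:ℕ) ∈ U.erase 2 := Finset.mem_erase.mpr ⟨by norm_num, h3U⟩
      rw [← Finset.prod_erase_mul _ H h3']
      have hH2 : H 2 = 8 := if_pos rfl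
      have hH3 : H 3 = 3 := by rw [hH]; norm_num
      have hPsub : P ⊆ (U.erase 2).erase 3 := by
        intro p hp
        have h1 : 3 < p := hPgt p hp
        refine Finset.mem_erase.mpr ⟨by omega, Finset.mem_erase.mpr ⟨by omega, ?_⟩⟩
        exact Finset.mem_union_right _
          (Finset.mem_insert_of_mem (Finset.mem_insert_of_mem hp))
      have hmid : (∏ p ∈ (U.erase 2).erase 3, H p) = ∏ p ∈ P, F p := by
        have hcongr : (∏ p ∈ (U.erase 2).erase 3, H p) =
            ∏ p ∈ (U.erase 2).erase 3, (if p ∈ P then F p else 1) := by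
          apply Finset.prod_congr rfl
          intro p hp
          have hne3 : p ≠ 3 := (Finset.mem_erase.mp hp).1
          have hne2 : p ≠ 2 := (Finset.mem_erase.mp (Finset.mem_erase.mp hp).2).1
          rw [hH]; dsimp only; rw [if_neg hne2, if_neg hne3]
        rw [hcongr]
        rw [← Finset.prod_subset hPsub (fun x _ hx => if_neg hx)]
        exact Finset.prod_congr rfl fun p hp => if_pos hp
      rw [hmid, hH2, hH3]
      ring
    calc (∏ p ∈ S, cpFactor δ p) = ∏ p ∈ U, (if p ∈ S then cpFactor δ p else 1) := step1
      _ ≤ ∏ p ∈ U, H p := step2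
      _ = 24 * ∏ p ∈ P, F p := step3
  refine le_trans hmain ?_
  apply mul_le_mul_of_nonneg_right hprod (Real.rpow_nonneg (by positivity) _)
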